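/- For every n ∈ ℕ with n ≥ 2, the Euler numbers and Lucas numbers satisfy E_n − (L_{n+1} − (7/2)·L_n) = Σ_{k=2}^{n} (E_k − 3·E_{k−1} + 5·Σ_{s=0}^{k−2} (−1)^{k−s}·2^{k−s−2}·E_s)·L_{n−k+1}. -/

import Mathlib

noncomputable section

open scoped ENNReal NNReal

/-- `Eu x k` is the Euler polynomial `E_k(x)`, characterized by the generating function
`(2/(e^z+1)) e^{xz} = Σ_k E_k(x) z^k / k!` for `|z| < π`. -/
def IsEulerFamily (Eu : ℝ → ℕ → ℝ) : Prop :=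
  ∀ x z : ℝ, |z| < Real.pi →
    HasSum (fun k : ℕ => Eu x k * z ^ k / (Nat.factorial k : ℝ))
      (2 / (Real.exp z + 1) * Real.exp (x * z))

/-- The Lucas sequence: `L_1 = 1`, `L_2 = 3`, `L_{m+2} = L_{m+1} + L_m` (so `L_0 = 2`). -/
def lucasSeq : ℕ → ℕ
  | 0 => 2
  | 1 => 1
  | m + 2 => lucasSeq (m + 1) + lucasSeq m

-- Key algebraic lemma: a_{n+1} + 2 a_n = E_{n+1} - E_n - E_{n-1} for n ≥ 2, any E.
lemma key_lemma (E : ℕ → ℝ) (n : ℕ) (hn : 2 ≤ n) :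
    (E (n+1) - 3 * E (n+1-1)
      + 5 * ∑ s ∈ Finset.Icc 0 (n+1-2), (-1:ℝ)^(n+1-s) * 2^(n+1-s-2) * E s)
    + 2 * (E n - 3 * E (n-1)
      + 5 * ∑ s ∈ Finset.Icc 0 (n-2), (-1:ℝ)^(n-s) * 2^(n-s-2) * E s)
    = E (n+1) - E n - E (n-1) := by
  obtain ⟨m, rfl⟩ : ∃ m, n = m + 2 := ⟨n - 2, by omega⟩
  have h1 : m + 2 + 1 - 1 = m + 2 := by omega
  have h2 : m + 2 + 1 - 2 = m + 1 := by omega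
  have h3 : m + 2 - 1 = m + 1 := by omega
  have h4 : m + 2 - 2 = m := by omega
  rw [h1, h2, h3, h4]
  have hsplit : (∑ s ∈ Finset.Icc 0 (m+1), (-1:ℝ)^(m+2+1-s) * 2^(m+2+1-s-2) * E s)
      = E (m+1) + ∑ s ∈ Finset.Icc 0 m, (-2) * ((-1:ℝ)^(m+2-s) * 2^(m+2-s-2) * E s) := by
    rw [Finset.sum_Icc_succ_top (Nat.zero_le _)]
    have hterm : (-1:ℝ)^(m+2+1-(m+1)) * 2^(m+2+1-(m+1)-2) * E (m+1) = E (m+1) := by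
      have : m+2+1-(m+1) = 2 := by omega
      rw [this]; norm_num
    rw [hterm, add_comm]
    congr 1
    refine Finset.sum_congr rfl fun s hs => ?_
    have hsm : s ≤ m := (Finset.mem_Icc.mp hs).2
    have e1 : m+2+1-s = (m+2-s)+1 := by omega
    have e2 : m+2+1-s-2 = (m+2-s-2)+1 := by omega
    rw [e2, e1, pow_succ, pow_succ]
    ring
  rw [hsplit, ← Finset.mul_sum]
  ring

lemma lucas_cast_rec (m : ℕ) :
    (lucasSeq (m+2) : ℝ) = (lucasSeq (m+1) : ℝ) + (lucasSeq m : ℝ) := by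
  rw [show lucasSeq (m+2) = lucasSeq (m+1) + lucasSeq m from rfl]
  push_cast; ring

-- The main algebraic identity, assuming only E 0 = 1 and E 1 = -1/2.
lemma main_aux (E : ℕ → ℝ) (hE0 : E 0 = 1) (hE1 : E 1 = -1/2) :
    ∀ n : ℕ, 2 ≤ n →
    E n - ((lucasSeq (n + 1) : ℝ) - 7 / 2 * (lucasSeq n : ℝ))
      = ∑ k ∈ Finset.Icc 2 n,
          (E k - 3 * E (k - 1)
            + 5 * ∑ s ∈ Finset.Icc 0 (k - 2),
                (-1 : ℝ) ^ (k - s) * 2 ^ (k - s - 2) * E s) *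
            (lucasSeq (n - k + 1) : ℝ) := by
  set A : ℕ → ℝ := fun k => E k - 3 * E (k - 1)
      + 5 * ∑ s ∈ Finset.Icc 0 (k - 2), (-1 : ℝ) ^ (k - s) * 2 ^ (k - s - 2) * E s with hA
  suffices H : ∀ n : ℕ, 2 ≤ n →
      (E n - ((lucasSeq (n + 1) : ℝ) - 7 / 2 * (lucasSeq n : ℝ))
        = ∑ k ∈ Finset.Icc 2 n, A k * (lucasSeq (n - k + 1) : ℝ)) ∧
      (E (n+1) - ((lucasSeq (n + 2) : ℝ) - 7 / 2 * (lucasSeq (n+1) : ℝ))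
        = ∑ k ∈ Finset.Icc 2 (n+1), A k * (lucasSeq (n+1 - k + 1) : ℝ)) by
    intro n hn
    exact (H n hn).1
  intro n hn
  induction n, hn using Nat.le_induction with
  | base =>
      have hL2 : lucasSeq 2 = 3 := rfl
      have hL3 : lucasSeq 3 = 4 := rfl
      have hL4 : lucasSeq 4 = 7 := rfl
      constructor
      · rw [Finset.Icc_self, Finset.sum_singleton]
        simp only [hA]
        norm_num [show lucasSeq 1 = 1 from rfl, hL2, hL3, hE0, hE1]
        ring
      · rw [show (2:ℕ)+1 = 2+1 from rfl, Finset.sum_Icc_succ_top (by omega),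
          Finset.Icc_self, Finset.sum_singleton]
        simp only [hA]
        rw [show (3:ℕ)-2 = 1 from rfl, show (2:ℕ)-2 = 0 from rfl,
          Finset.sum_Icc_succ_top (by omega : (0:ℕ) ≤ 0 + 1), Finset.Icc_self,
          Finset.sum_singleton]
        norm_num [show lucasSeq 1 = 1 from rfl, hL2, hL3, hL4, hE0, hE1]
        ring
  | succ n hn ih =>
      obtain ⟨ih1, ih2⟩ := ih
      refine ⟨ih2, ?_⟩
      -- Split the top two terms of the sum for n+2
      have hsplit2 : ∑ k ∈ Finset.Icc 2 (n+2), A k * (lucasSeq (n+2 - k + 1) : ℝ)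
          = (∑ k ∈ Finset.Icc 2 n, A k * (lucasSeq (n+2 - k + 1) : ℝ))
            + A (n+1) * (lucasSeq 2 : ℝ) + A (n+2) * (lucasSeq 1 : ℝ) := by
        rw [show n+2 = (n+1)+1 from rfl, Finset.sum_Icc_succ_top (by omega),
          Finset.sum_Icc_succ_top (by omega)]
        have e1 : n+1+1 - (n+1+1) + 1 = 1 := by omega
        have e2 : n+1+1 - (n+1) + 1 = 2 := by omega
        rw [e1, e2]
      have hsplit1 : ∑ k ∈ Finset.Icc 2 (n+1), A k * (lucasSeq (n+1 - k + 1) : ℝ)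
          = (∑ k ∈ Finset.Icc 2 n, A k * (lucasSeq (n+1 - k + 1) : ℝ))
            + A (n+1) * (lucasSeq 1 : ℝ) := by
        rw [Finset.sum_Icc_succ_top (by omega)]
        have e1 : n+1 - (n+1) + 1 = 1 := by omega
        rw [e1]
      -- the middle sum splits by the Lucas recurrence
      have hmid : ∑ k ∈ Finset.Icc 2 n, A k * (lucasSeq (n+2 - k + 1) : ℝ)
          = (∑ k ∈ Finset.Icc 2 n, A k * (lucasSeq (n+1 - k + 1) : ℝ))
            + ∑ k ∈ Finset.Icc 2 n, A k * (lucasSeq (n - k + 1) : ℝ) := by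
        rw [← Finset.sum_add_distrib]
        refine Finset.sum_congr rfl fun k hk => ?_
        have hkn : k ≤ n := (Finset.mem_Icc.mp hk).2
        have e1 : n+2 - k + 1 = (n - k + 1) + 2 := by omega
        have e2 : n+1 - k + 1 = (n - k + 1) + 1 := by omega
        rw [e1, e2, lucas_cast_rec]
        ring
      have hkey := key_lemma E (n+1) (by omega)
      have hL1 : (lucasSeq 1 : ℝ) = 1 := by norm_num [show lucasSeq 1 = 1 from rfl]
      have hL2 : (lucasSeq 2 : ℝ) = 3 := by norm_num [show lucasSeq 2 = 3 from rfl]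
      have hrec1 : (lucasSeq (n+3) : ℝ) = (lucasSeq (n+2) : ℝ) + (lucasSeq (n+1) : ℝ) :=
        lucas_cast_rec (n+1)
      have hrec2 : (lucasSeq (n+2) : ℝ) = (lucasSeq (n+1) : ℝ) + (lucasSeq n : ℝ) :=
        lucas_cast_rec n
      have hA2 : A (n+2) + 2 * A (n+1) = E (n+2) - E (n+1) - E n := by
        have := key_lemma E (n+1) (by omega)
        simp only [hA]
        convert this using 4
        all_goals omega
      rw [hsplit2, hmid]
      rw [hsplit1] at ih2
      rw [hL1] at ih2
      rw [hL1, hL2]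
      simp only [show n+1+1 = n+2 from rfl, show n+1+2 = n+3 from rfl]
      linear_combination ih1 + ih2 - hA2 - hrec1 + (7/2 : ℝ) * hrec2

theorem euler_number_lucas_identity (Eu : ℝ → ℕ → ℝ) (hEu : IsEulerFamily Eu)
    (n : ℕ) (hn : 2 ≤ n) :
    Eu 0 n - ((lucasSeq (n + 1) : ℝ) - 7 / 2 * (lucasSeq n : ℝ))
      = ∑ k ∈ Finset.Icc 2 n,
          (Eu 0 k - 3 * Eu 0 (k - 1)
            + 5 * ∑ s ∈ Finset.Icc 0 (k - 2),
                (-1 : ℝ) ^ (k - s) * 2 ^ (k - s - 2) * Eu 0 s) *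
            (lucasSeq (n - k + 1) : ℝ) := by
  have hE0 : Eu 0 0 = 1 := by
    have h := hEu 0 0 (by simpa using Real.pi_pos)
    have h2 : HasSum (fun k : ℕ => Eu 0 k * (0:ℝ) ^ k / (Nat.factorial k : ℝ)) (Eu 0 0) := by
      have := hasSum_single (f := fun k : ℕ => Eu 0 k * (0:ℝ) ^ k / (Nat.factorial k : ℝ)) 0
        (fun b hb => by simp [zero_pow hb])
      simpa using this
    have := h.unique h2
    rw [← this]
    norm_num [Real.exp_zero]
  have hE1 : Eu 0 1 = -1/2 := by
    set f : ℝ → ℝ := fun z => 2 / (Real.exp z + 1) with hf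
    set p : FormalMultilinearSeries ℝ ℝ ℝ :=
      FormalMultilinearSeries.ofScalars ℝ (fun k => Eu 0 k / (Nat.factorial k : ℝ)) with hp
    have h2pi : |(2:ℝ)| < Real.pi := by
      rw [abs_of_pos (by norm_num)]
      linarith [Real.pi_gt_three]
    have hrad : (1 : ℝ≥0∞) ≤ p.radius := by
      have hs : Summable (fun n : ℕ => ‖p n‖ * ((2 : NNReal) : ℝ) ^ n) := by
        have h2 := (hEu 0 2 h2pi).summable
        have h2' : Summable (fun k : ℕ => |Eu 0 k * 2 ^ k / (Nat.factorial k : ℝ)|) :=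
          h2.abs
        refine h2'.congr fun n => ?_
        rw [hp, FormalMultilinearSeries.ofScalars_norm]
        rw [abs_div, abs_mul, Real.norm_eq_abs, abs_div]
        rw [abs_pow, abs_two, Nat.abs_cast]
        push_cast
        ring
      have := p.le_radius_of_summable hs
      refine le_trans ?_ this
      norm_num
    have hball : HasFPowerSeriesOnBall f p 0 1 := by
      refine ⟨hrad, one_pos, fun {y} hy => ?_⟩
      have hy1 : |y| < 1 := by
        rw [EMetric.mem_ball, edist_dist, Real.dist_eq, sub_zero] at hy
        exact ENNReal.ofReal_lt_one.mp hy
      have hypi : |y| < Real.pi := lt_trans hy1 (by linarith [Real.pi_gt_three])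
      have h := hEu 0 y hypi
      rw [zero_mul, Real.exp_zero, mul_one] at h
      have : f (0 + y) = 2 / (Real.exp y + 1) := by rw [zero_add]
      rw [this]
      refine h.congr_fun fun n => ?_
      rw [hp, FormalMultilinearSeries.ofScalars_apply_eq]
      rw [smul_eq_mul]
      ring
    have hderiv := hball.hasFPowerSeriesAt.deriv
    have hp1 : (p 1 fun _ => (1:ℝ)) = Eu 0 1 := by
      rw [hp, FormalMultilinearSeries.ofScalars_apply_eq]
      norm_num
    have hd : HasDerivAt f (-(1/2)) 0 := by
      have h1 : HasDerivAt (fun z => Real.exp z + 1) (Real.exp 0) 0 :=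
        (Real.hasDerivAt_exp 0).add_const 1
      have h2 := (hasDerivAt_const (0:ℝ) (2:ℝ)).div h1 (by positivity)
      refine (h2 : HasDerivAt f _ 0).congr_deriv ?_
      rw [Real.exp_zero]
      norm_num
    have : deriv f 0 = -(1/2) := hd.deriv
    rw [hderiv, hp1] at this
    linarith
  exact main_aux (Eu 0) hE0 hE1 n hn

end
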